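/- In a PET, two sharp effects p, q on the same system are orthogonal (i.e., p + q is defined) if and only if q ∘ asrt_p = 0. -/
import Mathlib


universe u v

/-- An effect algebra: a set with a partially defined commutative associative
addition (encoded via `Option`), a zero, a one, such that `x + 0 = x`,
`x + 1` defined implies `x = 0`, and every element has a unique complement. -/
structure EffectAlgebra (E : Type u) where
  add : E → E → Option E
  zero : E
  one : E
  add_comm' : ∀ x y, add x y = add y x
  add_assoc' : ∀ x y z xy xyz, add x y = some xy → add xy z = some xyz →
      ∃ yz, add y z = some yz ∧ add x yz = some xyz
  add_zero' : ∀ x, add x zero = some x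
  one_max : ∀ x y, add x one = some y → x = zero
  compl_exists : ∀ x, ∃ y, add x y = some one
  compl_unique : ∀ x y₁ y₂, add x y₁ = some one → add x y₂ = some one → y₁ = y₂

namespace EffectAlgebra

variable {E : Type u} (a : EffectAlgebra E)

/-- The natural order: `x ≤ y` iff there is `z` with `x + z = y`. -/
def le (x y : E) : Prop := ∃ z, a.add x z = some y

/-- The complement `x⊥`: the unique element with `x + x⊥ = 1`. -/
noncomputable def compl (x : E) : E := Classical.choose (a.compl_exists x)

theorem compl_spec (x : E) : a.add x (a.compl x) = some a.one :=
  Classical.choose_spec (a.compl_exists x)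

end EffectAlgebra

open CategoryTheory

/-- An effect theory: a category with a designated trivial system `I` such
that each `Eff(A) := Hom(A, I)` is an effect algebra and precomposition
preserves zero and partial sums. -/
structure EffectTheory (C : Type u) [Category.{v} C] where
  I : C
  ea : ∀ A : C, EffectAlgebra (A ⟶ I)
  comp_zero : ∀ {A B : C} (g : B ⟶ A), g ≫ (ea A).zero = (ea B).zero
  comp_add : ∀ {A B : C} (g : B ⟶ A) (p q s : A ⟶ I),
      (ea A).add p q = some s → (ea B).add (g ≫ p) (g ≫ q) = some (g ≫ s)

namespace EffectTheory

variable {C : Type u} [Category.{v} C] (E : EffectTheory C)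

/-- `q` is the image of `f`: the least effect with `q ∘ f = 1 ∘ f`. -/
def IsImage {A B : C} (f : A ⟶ B) (q : B ⟶ E.I) : Prop :=
  f ≫ q = f ≫ (E.ea B).one ∧
    ∀ r : B ⟶ E.I, f ≫ r = f ≫ (E.ea B).one → (E.ea B).le q r

/-- An effect is sharp when it is the image of some map. -/
def Sharp {A : C} (q : A ⟶ E.I) : Prop := ∃ (B : C) (f : B ⟶ A), E.IsImage f q

/-- `π` is a compression for the effect `q`: `1 ∘ π = q ∘ π`, and `π` is final
with this property. -/
def IsCompression {B A : C} (π : B ⟶ A) (q : A ⟶ E.I) : Prop :=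
  π ≫ (E.ea A).one = π ≫ q ∧
    ∀ {D : C} (f : D ⟶ A), f ≫ (E.ea A).one = f ≫ q → ∃! g : D ⟶ B, f = g ≫ π

/-- `ξ` is a filter for the effect `q`: `1 ∘ ξ ≤ q`, and `ξ` is initial with
this property. -/
def IsFilter {A B : C} (ξ : A ⟶ B) (q : A ⟶ E.I) : Prop :=
  (E.ea A).le (ξ ≫ (E.ea B).one) q ∧
    ∀ {D : C} (f : A ⟶ D), (E.ea A).le (f ≫ (E.ea D).one) q → ∃! g : B ⟶ D, f = ξ ≫ g

/-- A map is pure when it is a filter followed by a compression. -/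
def Pure {A B : C} (f : A ⟶ B) : Prop :=
  ∃ (D : C) (q : A ⟶ E.I) (r : B ⟶ E.I) (ξ : A ⟶ D) (π : D ⟶ B),
    E.IsFilter ξ q ∧ E.IsCompression π r ∧ f = ξ ≫ π

end EffectTheory

/-- A pure effect theory (PET): an effect theory in which every effect has a
filter and a compression, every map has an image, the negation of a sharp
effect is sharp, the pure maps form a dagger category, filters and
compressions of sharp effects are adjoint, and compressions of sharp effects
are isometries. -/
structure PET {C : Type u} [Category.{v} C] (E : EffectTheory C) where
  compObj : ∀ {A : C}, (A ⟶ E.I) → C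
  compr : ∀ {A : C} (q : A ⟶ E.I), compObj q ⟶ A
  compr_is : ∀ {A : C} (q : A ⟶ E.I), E.IsCompression (compr q) q
  filtObj : ∀ {A : C}, (A ⟶ E.I) → C
  filt : ∀ {A : C} (q : A ⟶ E.I), A ⟶ filtObj q
  filt_is : ∀ {A : C} (q : A ⟶ E.I), E.IsFilter (filt q) q
  im : ∀ {A B : C}, (A ⟶ B) → (B ⟶ E.I)
  im_is : ∀ {A B : C} (f : A ⟶ B), E.IsImage f (im f)
  dag : ∀ {A B : C}, (A ⟶ B) → (B ⟶ A)
  pure_id : ∀ A : C, E.Pure (𝟙 A)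
  pure_comp : ∀ {A B D : C} (f : A ⟶ B) (g : B ⟶ D), E.Pure f → E.Pure g → E.Pure (f ≫ g)
  pure_dag : ∀ {A B : C} (f : A ⟶ B), E.Pure f → E.Pure (dag f)
  dag_dag : ∀ {A B : C} (f : A ⟶ B), E.Pure f → dag (dag f) = f
  dag_id : ∀ A : C, dag (𝟙 A) = 𝟙 A
  dag_comp : ∀ {A B D : C} (f : A ⟶ B) (g : B ⟶ D), E.Pure f → E.Pure g →
      dag (f ≫ g) = dag g ≫ dag f
  sharp_compl : ∀ {A : C} (q : A ⟶ E.I), E.Sharp q → E.Sharp ((E.ea A).compl q)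
  dag_compr_filt : ∀ {A B : C} (π : B ⟶ A) (q : A ⟶ E.I), E.Sharp q →
      E.IsCompression π q → E.IsFilter (dag π) q
  dag_filt_compr : ∀ {A B : C} (ξ : A ⟶ B) (q : A ⟶ E.I), E.Sharp q →
      E.IsFilter ξ q → E.IsCompression (dag ξ) q
  compr_isometry : ∀ {A B : C} (π : B ⟶ A) (q : A ⟶ E.I), E.Sharp q →
      E.IsCompression π q → π ≫ dag π = 𝟙 B

namespace PET

variable {C : Type u} [Category.{v} C] {E : EffectTheory C} (P : PET E)

/-- The assert map of an effect `p`: `asrt_p := π_p ∘ π_p†`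
(in diagrammatic order, `π_p†` followed by `π_p`). -/
def asrt {A : C} (p : A ⟶ E.I) : A ⟶ A := P.dag (P.compr p) ≫ P.compr p

end PET

/-- In a PET, sharp effects `p, q` on the same system are
orthogonal (`p + q` is defined) iff `q ∘ asrt_p = 0`. -/
theorem pet_orthogonal_iff_asrt_zero {C : Type u} [Category.{v} C] {E : EffectTheory C}
    (P : PET E) {A : C} (p q : A ⟶ E.I) (hp : E.Sharp p) (hq : E.Sharp q) :
    ((E.ea A).add p q).isSome ↔ P.asrt p ≫ q = (E.ea A).zero := by
  have hcomp := P.compr_is p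
  have hfilt := P.dag_compr_filt (P.compr p) p hp hcomp
  have hiso := P.compr_isometry (P.compr p) p hp hcomp
  -- The compression of a sharp effect is unital:
  have hunital : P.compr p ≫ (E.ea A).one = (E.ea (P.compObj p)).one := by
    obtain ⟨z, hz⟩ := hfilt.1
    have h2 := E.comp_add (P.compr p) _ _ _ hz
    rw [← Category.assoc, hiso, Category.id_comp, ← hcomp.1] at h2
    have hz0 : P.compr p ≫ z = (E.ea (P.compObj p)).zero := by
      apply (E.ea (P.compObj p)).one_max _ (P.compr p ≫ (E.ea A).one)
      rw [(E.ea (P.compObj p)).add_comm']; exact h2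
    rw [hz0, (E.ea (P.compObj p)).add_zero'] at h2
    exact (Option.some_injective _ h2).symm
  constructor
  · intro h
    obtain ⟨s, hs⟩ := Option.isSome_iff_exists.mp h
    have h2 := E.comp_add (P.compr p) p q s hs
    rw [← hcomp.1, hunital] at h2
    have hq0 : P.compr p ≫ q = (E.ea (P.compObj p)).zero :=
      (E.ea (P.compObj p)).one_max _ _
        (by rw [(E.ea (P.compObj p)).add_comm']; exact h2)
    simp only [PET.asrt, Category.assoc]
    rw [hq0, E.comp_zero]
  · intro h
    have hπq : P.compr p ≫ q = (E.ea (P.compObj p)).zero := by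
      calc P.compr p ≫ q
          = (P.compr p ≫ P.dag (P.compr p)) ≫ P.compr p ≫ q := by
            rw [hiso, Category.id_comp]
        _ = P.compr p ≫ (P.asrt p ≫ q) := by simp [PET.asrt]
        _ = P.compr p ≫ (E.ea A).zero := by rw [h]
        _ = (E.ea (P.compObj p)).zero := E.comp_zero _
    have hc := E.comp_add (P.compr p) q ((E.ea A).compl q) (E.ea A).one
      ((E.ea A).compl_spec q)
    rw [hπq, hunital] at hc
    have h0 : (E.ea (P.compObj p)).add (E.ea (P.compObj p)).zero
        (P.compr p ≫ (E.ea A).compl q) = some (P.compr p ≫ (E.ea A).compl q) := by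
      rw [(E.ea (P.compObj p)).add_comm']; exact (E.ea (P.compObj p)).add_zero' _
    rw [h0] at hc
    have hq1 : P.compr p ≫ (E.ea A).compl q = (E.ea (P.compObj p)).one :=
      Option.some_injective _ hc
    obtain ⟨B', f, hf1, hf2⟩ := hp
    obtain ⟨g, hg, -⟩ := hcomp.2 f hf1.symm
    have hfq : f ≫ (E.ea A).compl q = f ≫ (E.ea A).one := by
      rw [hg, Category.assoc, Category.assoc, hq1, hunital]
    obtain ⟨z, hz⟩ := hf2 _ hfq
    have hq1' : (E.ea A).add ((E.ea A).compl q) q = some (E.ea A).one := by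
      rw [(E.ea A).add_comm']; exact (E.ea A).compl_spec q
    obtain ⟨zq, hzq, hpzq⟩ := (E.ea A).add_assoc' p z q _ _ hz hq1'
    have hzqp : (E.ea A).add zq p = some (E.ea A).one := by
      rw [(E.ea A).add_comm']; exact hpzq
    obtain ⟨qp, hqp, -⟩ := (E.ea A).add_assoc' z q p _ _ hzq hzqp
    exact Option.isSome_iff_exists.mpr ⟨qp, by rw [(E.ea A).add_comm']; exact hqp⟩
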